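/- Let P : ℝⁿ → ℝ be a homogeneous polynomial of degree m ≥ 2 with P(ξ) > 0 for all ξ ≠ 0, and extend P to a polynomial on ℂⁿ. Then there exists a constant d₀ > 0 such that Re P(ξ − iη) ≥ −d₀ |η|^m for all ξ, η ∈ ℝⁿ. -/

import Mathlib

open MeasureTheory Complex
open scoped ENNReal RealInnerProductSpace

noncomputable section

/-- The Fourier transform `f̂(ξ) = ∫ e^{−ix·ξ} f(x) dx`. -/
def FT {n : ℕ} (f : EuclideanSpace ℝ (Fin n) → ℂ) (ξ : EuclideanSpace ℝ (Fin n)) : ℂ :=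
  ∫ x, Complex.exp (-Complex.I * (⟪x, ξ⟫ : ℂ)) * f x

/-- The inverse Fourier transform `𝓕⁻¹g(x) = (2π)^{−n} ∫ e^{ix·ξ} g(ξ) dξ`. -/
def IFT {n : ℕ} (g : EuclideanSpace ℝ (Fin n) → ℂ) (x : EuclideanSpace ℝ (Fin n)) : ℂ :=
  (((2 * Real.pi) ^ n : ℝ) : ℂ)⁻¹ * ∫ ξ, Complex.exp (Complex.I * (⟪x, ξ⟫ : ℂ)) * g ξ

/-- The determinant of the Hessian matrix `(∂²f/∂ξᵢ∂ξⱼ)` of `f` at `ξ`. -/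
def HessDet {n : ℕ} (f : EuclideanSpace ℝ (Fin n) → ℝ) (ξ : EuclideanSpace ℝ (Fin n)) : ℝ :=
  Matrix.det (Matrix.of fun i j : Fin n =>
    fderiv ℝ (fun y => fderiv ℝ f y (EuclideanSpace.single j 1)) ξ (EuclideanSpace.single i 1))

lemma aux_eval_smul {K : Type*} [CommSemiring K] {σ : Type*} {φ : MvPolynomial σ K} {m : ℕ}
    (hφ : φ.IsHomogeneous m) (c : K) (x : σ → K) :
    MvPolynomial.eval (fun i => c * x i) φ = c ^ m * MvPolynomial.eval x φ := by
  rw [MvPolynomial.eval_eq, MvPolynomial.eval_eq, Finset.mul_sum]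
  refine Finset.sum_congr rfl fun d hd => ?_
  have hdeg : (Finsupp.weight 1) d = m := hφ (MvPolynomial.mem_support_iff.mp hd)
  simp_rw [mul_pow, Finset.prod_mul_distrib, Finset.prod_pow_eq_pow_sum]
  have h2 : d.degree = m := by rw [Finsupp.degree_eq_weight_one]; exact hdeg
  rw [show ∑ i ∈ d.support, d i = d.degree from rfl, h2]
  ring

lemma aux_eval_real {n : ℕ} (P : MvPolynomial (Fin n) ℝ) (x : Fin n → ℝ) :
    MvPolynomial.eval (fun i => (x i : ℂ)) (MvPolynomial.map (algebraMap ℝ ℂ) P)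
      = ((MvPolynomial.eval x P : ℝ) : ℂ) := by
  rw [MvPolynomial.eval_map]
  exact (MvPolynomial.eval₂_comp_left (algebraMap ℝ ℂ) (RingHom.id ℝ) x P).symm

/-- For a positive elliptic homogeneous polynomial `P` of degree `m`, there is `d₀ > 0`
with `Re P(ξ − iη) ≥ −d₀ |η|^m` for all real vectors `ξ, η`. -/
theorem statement15
    (n m : ℕ) (hn : 2 ≤ n) (hm : 2 ≤ m)
    (P : MvPolynomial (Fin n) ℝ) (hhom : P.IsHomogeneous m)
    (hell : ∀ ξ : EuclideanSpace ℝ (Fin n), ξ ≠ 0 →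
      0 < MvPolynomial.eval (fun i => ξ i) P) :
    ∃ d₀ : ℝ, 0 < d₀ ∧ ∀ ξ η : EuclideanSpace ℝ (Fin n),
      -(d₀ * ‖η‖ ^ m) ≤
        (MvPolynomial.eval (fun i => (ξ i : ℂ) - Complex.I * (η i : ℂ))
          (MvPolynomial.map (algebraMap ℝ ℂ) P)).re := by
  set E := EuclideanSpace ℝ (Fin n)
  set Q := MvPolynomial.map (algebraMap ℝ ℂ) P with hQdef
  have hQ : Q.IsHomogeneous m := hhom.map _
  set F : E × E → ℝ := fun p =>
    (MvPolynomial.eval (fun i => (p.1 i : ℂ) - Complex.I * (p.2 i : ℂ)) Q).re with hFdef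
  -- continuity of F
  have hFcont : Continuous F := by
    apply Complex.continuous_re.comp
    apply (MvPolynomial.continuous_eval Q).comp
    apply continuous_pi
    intro i
    exact (Complex.continuous_ofReal.comp ((continuous_apply i).comp ((PiLp.continuous_ofLp 2 _).comp continuous_fst))).sub
      (continuous_const.mul (Complex.continuous_ofReal.comp
        ((continuous_apply i).comp ((PiLp.continuous_ofLp 2 _).comp continuous_snd))))
  -- F at real points
  have hFreal : ∀ ξ : E, F (ξ, 0) = MvPolynomial.eval (fun i => ξ i) P := by
    intro ξ
    have h1 : (fun i => ((ξ, (0:E)).1 i : ℂ) - Complex.I * ((ξ, (0:E)).2 i : ℂ))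
        = fun i => ((ξ i : ℝ) : ℂ) := by
      funext i
      show (ξ i : ℂ) - Complex.I * (((0:E) i : ℝ) : ℂ) = _
      rw [show ((0:E) i) = (0:ℝ) from rfl]
      push_cast; ring
    rw [hFdef]; simp only [h1, hQdef, aux_eval_real, Complex.ofReal_re]
  -- scaling
  have hFscale : ∀ (t : ℝ) (p : E × E), F (t • p) = t ^ m * F p := by
    intro t p
    have hpt : (fun i => ((t • p).1 i : ℂ) - Complex.I * ((t • p).2 i : ℂ))
        = fun i => (t : ℂ) * ((p.1 i : ℂ) - Complex.I * (p.2 i : ℂ)) := by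
      funext i
      rw [show (t • p).1 i = t * p.1 i from rfl, show (t • p).2 i = t * p.2 i from rfl]
      push_cast; ring
    rw [hFdef]
    simp only [hpt, aux_eval_smul hQ]
    rw [← Complex.ofReal_pow, Complex.re_ofReal_mul]
  -- the unit sphere in E × E
  have hScpt : IsCompact (Metric.sphere (0 : E × E) 1) := isCompact_sphere 0 1
  have hSne : (Metric.sphere (0 : E × E) 1).Nonempty := by
    refine ⟨(EuclideanSpace.single (⟨0, by omega⟩ : Fin n) (1:ℝ), 0), ?_⟩
    rw [mem_sphere_zero_iff_norm, Prod.norm_def]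
    rw [norm_zero]
    rw [EuclideanSpace.norm_single]
    norm_num
  -- min of F on sphere
  obtain ⟨q, hqS, hq⟩ := hScpt.exists_isMinOn hSne (hFcont.continuousOn)
  set M : ℝ := max 0 (-F q) with hMdef
  have hM0 : 0 ≤ M := le_max_left _ _
  have hMq : ∀ p ∈ Metric.sphere (0 : E × E) 1, -M ≤ F p := by
    intro p hp
    have := hq hp
    have h2 : -M ≤ F q := by
      rw [hMdef]
      have : -F q ≤ max 0 (-F q) := le_max_right _ _
      linarith
    exact h2.trans this
  -- the bad set K
  set K := Metric.sphere (0 : E × E) 1 ∩ F ⁻¹' Set.Iic 0 with hKdef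
  have hKcpt : IsCompact K := hScpt.inter_right (isClosed_Iic.preimage hFcont)
  -- key claim on the sphere
  have key : ∃ d₀ : ℝ, 0 < d₀ ∧ ∀ p ∈ Metric.sphere (0 : E × E) 1,
      -(d₀ * ‖p.2‖ ^ m) ≤ F p := by
    rcases K.eq_empty_or_nonempty with hKe | hKne
    · refine ⟨1, one_pos, fun p hp => ?_⟩
      have hpK : p ∉ K := by rw [hKe]; exact Set.notMem_empty p
      have : ¬ (F p ≤ 0) := by
        intro h
        exact hpK ⟨hp, h⟩
      have h1 : 0 ≤ 1 * ‖p.2‖ ^ m := by positivity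
      linarith
    · obtain ⟨p₀, hp₀K, hmin⟩ := hKcpt.exists_isMinOn hKne
        ((continuous_snd.norm).continuousOn)
      set δ : ℝ := ‖p₀.2‖ with hδdef
      have hδpos : 0 < δ := by
        rcases eq_or_ne p₀.2 0 with h0 | h0
        · exfalso
          have hs : p₀ ∈ Metric.sphere (0 : E × E) 1 := hp₀K.1
          have hn1 : ‖p₀‖ = 1 := by simpa using mem_sphere_zero_iff_norm.mp hs
          have h1 : ‖p₀.1‖ = 1 := by
            rw [Prod.norm_def, h0] at hn1
            simpa using hn1
          have hne1 : p₀.1 ≠ 0 := by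
            intro h; rw [h, norm_zero] at h1; norm_num at h1
          have := hell p₀.1 hne1
          have hFp : F p₀ = MvPolynomial.eval (fun i => p₀.1 i) P := by
            have : p₀ = (p₀.1, (0:E)) := by
              ext1
              · rfl
              · exact h0
            rw [this, hFreal]
          have hle := hp₀K.2
          simp only [Set.mem_preimage, Set.mem_Iic] at hle
          rw [hFp] at hle
          linarith
        · exact norm_pos_iff.mpr h0
      refine ⟨max 1 (M / δ ^ m), lt_of_lt_of_le one_pos (le_max_left _ _), fun p hp => ?_⟩
      set d₀ := max 1 (M / δ ^ m) with hd₀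
      rcases le_or_gt (F p) 0 with hFle | hFpos
      · have hpK : p ∈ K := ⟨hp, hFle⟩
        have hδp : δ ≤ ‖p.2‖ := hmin hpK
        have hpow : δ ^ m ≤ ‖p.2‖ ^ m := pow_le_pow_left₀ (le_of_lt hδpos) hδp m
        have hd₀M : M ≤ d₀ * ‖p.2‖ ^ m := by
          have h1 : M / δ ^ m ≤ d₀ := le_max_right _ _
          have hδm : 0 < δ ^ m := pow_pos hδpos m
          have h2 : M = (M / δ ^ m) * δ ^ m := by field_simp
          calc M = (M / δ ^ m) * δ ^ m := h2
            _ ≤ d₀ * δ ^ m := by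
                apply mul_le_mul_of_nonneg_right h1 (le_of_lt hδm)
            _ ≤ d₀ * ‖p.2‖ ^ m := by
                apply mul_le_mul_of_nonneg_left hpow
                exact le_trans zero_le_one (le_max_left _ _)
        have := hMq p hp
        linarith
      · have h1 : 0 ≤ d₀ * ‖p.2‖ ^ m := by
          apply mul_nonneg (le_trans zero_le_one (le_max_left _ _))
          positivity
        linarith
  obtain ⟨d₀, hd₀, hkey⟩ := key
  refine ⟨d₀, hd₀, fun ξ η => ?_⟩
  have hgoal : -(d₀ * ‖η‖ ^ m) ≤ F (ξ, η) := by
    rcases eq_or_ne ((ξ, η) : E × E) 0 with h0 | h0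
    · have hξ : ξ = 0 := congrArg Prod.fst h0
      have hη : η = 0 := congrArg Prod.snd h0
      subst hξ; subst hη
      have hF0 : F (0, 0) = 0 := by
        rw [hFreal]
        have h1 : (fun i => (0:E) i) = fun _ : Fin n => (0:ℝ) := by funext i; rfl
        rw [h1]
        rw [MvPolynomial.eval_zero', MvPolynomial.constantCoeff_eq]
        apply hhom.coeff_eq_zero
        rw [map_zero]
        omega
      rw [hF0]
      have : ‖(0:E)‖ = 0 := norm_zero
      rw [this]
      have : (0:ℝ) ^ m = 0 := by
        apply zero_pow; omega
      rw [this]; ring_nf; simp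
    · set t : ℝ := ‖((ξ, η) : E × E)‖ with htdef
      have ht : 0 < t := norm_pos_iff.mpr h0
      set p : E × E := t⁻¹ • (ξ, η) with hpdef
      have hpS : p ∈ Metric.sphere (0 : E × E) 1 := by
        rw [mem_sphere_zero_iff_norm, hpdef, norm_smul]
        rw [norm_inv, Real.norm_eq_abs, abs_of_pos ht]
        field_simp
        exact htdef.symm
      have hback : (ξ, η) = t • p := by
        rw [hpdef, smul_smul]
        rw [mul_inv_cancel₀ (ne_of_gt ht), one_smul]
      have hFp := hkey p hpS
      have hp2 : ‖p.2‖ = t⁻¹ * ‖η‖ := by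
        rw [hpdef]
        simp [norm_smul, abs_of_pos ht]
      calc -(d₀ * ‖η‖ ^ m) = t ^ m * -(d₀ * ‖p.2‖ ^ m) := by
            rw [hp2, mul_pow]
            have : t ^ m * (t⁻¹) ^ m = 1 := by
              rw [← mul_pow, mul_inv_cancel₀ (ne_of_gt ht), one_pow]
            field_simp
            rw [mul_assoc, one_div, this, mul_one]
        _ ≤ t ^ m * F p := by
            apply mul_le_mul_of_nonneg_left hFp
            positivity
        _ = F (t • p) := (hFscale t p).symm
        _ = F (ξ, η) := by rw [← hback]
  exact hgoal
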